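/- Plane reproduction for the linear model: Let φ be a strong non-linearity, let μ be a continuous probability density on ℝ^d invariant under the reflection r across the hyperplane P = {x : nᵀx + c = 0} (‖n‖=1), let h : ℝ^d → ℝ≥0 be invariant under r, and let τ be an unsigned similarity (τ(-a,b) = τ(a,b), differentiable in a). Define loss(w,b) = ∫ τ(φ(wᵀx + b), h(x)) μ(x) dx. Then at (w,b) = (αn, αc) for any α > 0, the partial derivative ∂loss/∂b vanishes, and the gradient ∇_w loss is parallel to n. -/

import Mathlib

open RealInnerProductSpace MeasureTheory

theorem plane_reproduction_linear_model {d : ℕ}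
    (φ : ℝ → ℝ) (hφdiff : Differentiable ℝ φ) (hφodd : ∀ a : ℝ, φ (-a) = -φ a)
    (β : ℝ) (hβ : 0 < β) (hβle : ∀ a : ℝ, β ≤ deriv φ a) (hleβ : ∀ a : ℝ, deriv φ a ≤ β⁻¹)
    (n : EuclideanSpace ℝ (Fin d)) (hn : ‖n‖ = 1) (c : ℝ)
    (μ : EuclideanSpace ℝ (Fin d) → ℝ) (hμcont : Continuous μ) (hμ0 : ∀ x, 0 ≤ μ x)
    (hμinv : ∀ x, μ (x - (2 * (⟪n, x⟫ + c)) • n) = μ x)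
    (h : EuclideanSpace ℝ (Fin d) → ℝ) (hh0 : ∀ x, 0 ≤ h x)
    (hhinv : ∀ x, h (x - (2 * (⟪n, x⟫ + c)) • n) = h x)
    (τ : ℝ → ℝ → ℝ) (hτeven : ∀ (a b : ℝ), 0 ≤ b → τ (-a) b = τ a b)
    (hτdiff : ∀ b : ℝ, 0 ≤ b → Differentiable ℝ (fun a => τ a b))
    (loss : EuclideanSpace ℝ (Fin d) → ℝ → ℝ)
    (hloss : ∀ w b, loss w b = ∫ x, τ (φ (⟪w, x⟫ + b)) (h x) * μ x)
    (hint : ∀ w b, Integrable fun x => τ (φ (⟪w, x⟫ + b)) (h x) * μ x)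
    (α : ℝ) (hα : 0 < α)
    (hdiffb : DifferentiableAt ℝ (fun b => loss (α • n) b) (α * c))
    (hdiffw : DifferentiableAt ℝ (fun w => loss w (α * c)) (α • n)) :
    deriv (fun b => loss (α • n) b) (α * c) = 0 ∧
    ∃ t : ℝ, gradient (fun w => loss w (α * c)) (α • n) = t • n := by
  have hnn : ⟪n, n⟫ = 1 := by
    rw [real_inner_self_eq_norm_sq, hn]; norm_num
  -- the reflection as a linear isometry
  let R : EuclideanSpace ℝ (Fin d) ≃ₗᵢ[ℝ] EuclideanSpace ℝ (Fin d) :=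
    (Submodule.reflection (ℝ ∙ n)).trans (LinearIsometryEquiv.neg ℝ)
  have hRapp : ∀ x, R x = x - (2 * ⟪n, x⟫) • n := by
    intro x
    show -((Submodule.reflection (ℝ ∙ n)) x) = _
    rw [Submodule.reflection_apply, Submodule.starProjection_unit_singleton ℝ hn x, two_smul]
    rw [two_mul, add_smul]
    abel
  have heq : (fun x : EuclideanSpace ℝ (Fin d) => x - (2 * (⟪n, x⟫ + c)) • n)
      = (fun y => y - (2*c) • n) ∘ R := by
    funext x
    simp only [Function.comp_apply, hRapp, mul_add, add_smul]
    abel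
  have hmp : MeasurePreserving (fun x : EuclideanSpace ℝ (Fin d) => x - (2 * (⟪n, x⟫ + c)) • n)
      volume volume := by
    rw [heq]
    exact (measurePreserving_sub_right volume _).comp R.measurePreserving
  have hemb : MeasurableEmbedding
      (fun x : EuclideanSpace ℝ (Fin d) => x - (2 * (⟪n, x⟫ + c)) • n) := by
    rw [heq]
    exact (R.toHomeomorph.trans (Homeomorph.subRight ((2*c) • n))).measurableEmbedding
  -- the flip identity on the argument of φ
  have hflip : ∀ (w : EuclideanSpace ℝ (Fin d)) (b : ℝ) (x : EuclideanSpace ℝ (Fin d)),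
      ⟪(2*⟪n,w⟫) • n - w, x⟫ + (2*c*⟪n,w⟫ - b)
        = -(⟪w, x - (2 * (⟪n, x⟫ + c)) • n⟫ + b) := by
    intro w b x
    rw [inner_sub_left, inner_smul_left, inner_sub_right, inner_smul_right]
    simp only [RCLike.star_def, conj_trivial, real_inner_comm w n]
    ring
  -- the key symmetry of the loss
  have hkey : ∀ (w : EuclideanSpace ℝ (Fin d)) (b : ℝ),
      loss w b = loss ((2*⟪n,w⟫) • n - w) (2*c*⟪n,w⟫ - b) := by
    intro w b
    rw [hloss, hloss]
    rw [← hmp.integral_comp hemb (fun x => τ (φ (⟪w, x⟫ + b)) (h x) * μ x)]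
    congr 1
    funext x
    simp only [hhinv x, hμinv x, hflip w b x, hφodd, hτeven _ _ (hh0 x)]
  -- part 1 : derivative in b vanishes
  have hb : ∀ b, loss (α • n) b = loss (α • n) (2*(α*c) - b) := by
    intro b
    have hin : ⟪n, α • n⟫ = α := by rw [inner_smul_right, hnn, mul_one]
    have := hkey (α • n) b
    rw [hin] at this
    have e1 : (2*α) • n - α • n = α • n := by
      rw [← sub_smul]; congr 1; ring
    have e2 : 2*c*α - b = 2*(α*c) - b := by ring
    rw [e1, e2] at this
    exact this
  have hd0 : deriv (fun b => loss (α • n) b) (α * c) = 0 := by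
    have hfun : (fun b => loss (α • n) b)
        = (fun b => (fun s => loss (α • n) s) (2*(α*c) - b)) := funext hb
    have h1 : deriv (fun b => loss (α • n) b) (α*c)
        = deriv (fun b => (fun s => loss (α • n) s) (2*(α*c) - b)) (α*c) := by
      rw [← hfun]
    rw [deriv_comp_const_sub (fun s => loss (α • n) s) (2*(α*c)) (α*c)] at h1
    have e : 2*(α*c) - α*c = α*c := by ring
    rw [e] at h1
    linarith
  refine ⟨hd0, ?_⟩
  -- part 2 : gradient is parallel to n
  have hperp : ∀ v ∈ (ℝ ∙ n)ᗮ,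
      ⟪gradient (fun w => loss w (α * c)) (α • n), v⟫ = 0 := by
    intro v hv
    have hnv : ⟪n, v⟫ = 0 :=
      (Submodule.mem_orthogonal _ v).1 hv n (Submodule.mem_span_singleton_self n)
    have hgr : ⟪gradient (fun w => loss w (α * c)) (α • n), v⟫
        = fderiv ℝ (fun w => loss w (α * c)) (α • n) v := by
      rw [gradient, InnerProductSpace.toDual_symm_apply]
    set D : ℝ := fderiv ℝ (fun w => loss w (α * c)) (α • n) v with hD
    -- the curve t ↦ α•n + t•v
    have hcurve : HasDerivAt (fun t : ℝ => α • n + t • v) v 0 := by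
      simpa using ((hasDerivAt_id (0:ℝ)).smul_const v).const_add (α • n)
    have hF : HasFDerivAt (fun w => loss w (α * c))
        (fderiv ℝ (fun w => loss w (α * c)) (α • n)) ((fun t : ℝ => α • n + t • v) 0) := by
      simpa using hdiffw.hasFDerivAt
    have hcomp : HasDerivAt (fun t : ℝ => loss (α • n + t • v) (α * c)) D 0 :=
      by have := hF.comp_hasDerivAt 0 hcurve; exact this
    -- evenness of the restricted loss
    have hGeven : ∀ t : ℝ,
        loss (α • n + t • v) (α * c) = loss (α • n + (-t) • v) (α * c) := by
      intro t
      have hin : ⟪n, α • n + t • v⟫ = α := by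
        rw [inner_add_right, inner_smul_right, inner_smul_right, hnn, hnv]
        ring
      have := hkey (α • n + t • v) (α * c)
      rw [hin] at this
      have e1 : (2*α) • n - (α • n + t • v) = α • n + (-t) • v := by module
      have e2 : 2*c*α - α*c = α*c := by ring
      rw [e1, e2] at this
      exact this
    have hG : (fun t : ℝ => loss (α • n + t • v) (α * c))
        = (fun t : ℝ => loss (α • n + (-t) • v) (α * c)) := funext hGeven
    have hneg : HasDerivAt (fun t : ℝ => loss (α • n + (-t) • v) (α * c)) (D * (-1)) 0 := by
      have hzero : HasDerivAt (fun t : ℝ => loss (α • n + t • v) (α * c)) D (-(0:ℝ)) := by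
        simpa using hcomp
      exact hzero.comp 0 (hasDerivAt_neg 0)
    rw [← hG] at hneg
    have : D = D * (-1) := hcomp.unique hneg
    have hD0 : D = 0 := by linarith
    rw [hgr]; exact hD0
  have hmem : gradient (fun w => loss w (α * c)) (α • n) ∈ (ℝ ∙ n)ᗮᗮ := by
    refine (Submodule.mem_orthogonal _ _).2 ?_
    intro v hv
    rw [real_inner_comm]
    exact hperp v hv
  rw [Submodule.orthogonal_orthogonal] at hmem
  obtain ⟨t, ht⟩ := Submodule.mem_span_singleton.mp hmem
  exact ⟨t, ht.symm⟩
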